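/- If the class C of ordered graphs is χ-bounded and does not contain some ordered graph on h vertices, then the right extension RM(C) is χ-bounded: if every H ∈ C satisfies χ(H) ≤ f(ω(H)), then every G ∈ RM(C) satisfies χ(G) ≤ f(φ(ω(G), h)) where φ is the function with φ(x,1)=φ(1,y)=1 and φ(ω,h)=φ(ω−1,h)·(φ(ω,h−1)+1)+1. -/

import Mathlib

def phiRM : ℕ → ℕ → ℕ
  | 0, _ => 1
  | _, 0 => 1
  | w+1, h+1 =>
    if w = 0 ∨ h = 0 then 1
    else phiRM w (h+1) * (phiRM (w+1) h + 1) + 1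
termination_by w h => w + h



lemma one_le_phiRM (w h : ℕ) : 1 ≤ phiRM w h := by
  cases w with
  | zero => simp [phiRM]
  | succ w => cases h with
    | zero => simp [phiRM]
    | succ h =>
      rw [phiRM]
      split <;> omega

lemma phiRM_base1 (x : ℕ) (hx : 1 ≤ x) : phiRM x 1 = 1 := by
  cases x with
  | zero => omega
  | succ w => rw [phiRM]; simp

lemma phiRM_base2 (y : ℕ) (hy : 1 ≤ y) : phiRM 1 y = 1 := by
  cases y with
  | zero => omega
  | succ h => rw [phiRM]; simp

lemma phiRM_rec (w h : ℕ) (hw : 2 ≤ w) (hh : 2 ≤ h) :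
    phiRM w h = phiRM (w - 1) h * (phiRM w (h - 1) + 1) + 1 := by
  obtain ⟨a, rfl⟩ : ∃ a, w = a + 2 := ⟨w - 2, by omega⟩
  obtain ⟨b, rfl⟩ : ∃ b, h = b + 2 := ⟨h - 2, by omega⟩
  rw [show a + 2 = (a+1) + 1 by ring, show b + 2 = (b+1) + 1 by ring, phiRM]
  simp

lemma le_phiRM (w h : ℕ) (hw : 2 ≤ w) (hh : 1 ≤ h) : h ≤ phiRM w h := by
  induction h with
  | zero => omega
  | succ h ih =>
    rcases Nat.eq_or_lt_of_le hh with h1 | h2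
    · simp [phiRM_base1 w (by omega), ← h1]
    · have hh' : 1 ≤ h := by omega
      have := ih hh'
      rw [phiRM_rec w (h+1) hw (by omega)]
      have h1 := one_le_phiRM (w-1) (h+1)
      have h2 := one_le_phiRM w h
      simp only [Nat.add_sub_cancel]
      nlinarith

def LinkedP {n k : ℕ} (G : SimpleGraph (Fin n)) (part : Fin n → Fin k) (i j : Fin k) : Prop :=
  ∃ u v, part u = i ∧ part v = j ∧ G.Adj u v

def CompTo {n k : ℕ} (G : SimpleGraph (Fin n)) (part : Fin n → Fin k) (v : Fin n) (i : Fin k) : Prop :=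
  ∀ u, part u = i → G.Adj u v

lemma compTo_of_adj {n k : ℕ} {G : SimpleGraph (Fin n)} {part : Fin n → Fin k}
    (hmod : ∀ u u' w : Fin n, part u = part u' → part u < part w → (G.Adj u w ↔ G.Adj u' w))
    {v u : Fin n} {i : Fin k} (hlt : i < part v) (hu : part u = i) (hadj : G.Adj u v) :
    CompTo G part v i := by
  intro u' hu'
  exact (hmod u' u v (by rw [hu', hu]) (by rw [hu']; exact hlt)).mpr hadj

lemma realize_all {n k : ℕ} (G : SimpleGraph (Fin n)) (part : Fin n → Fin k)
    (hmod : ∀ u u' w : Fin n, part u = part u' → part u < part w → (G.Adj u w ↔ G.Adj u' w)) :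
    ∀ (N ω h : ℕ), 1 ≤ ω → 1 ≤ h → ω + h ≤ N →
    ∀ S : Finset (Fin k), ((S : Set (Fin k)).Pairwise (LinkedP G part)) →
    (∀ t : Finset (Fin n), ((t : Set (Fin n)).Pairwise G.Adj) → (∀ v ∈ t, part v ∈ S) →
      t.card ≤ ω) →
    phiRM ω h + 1 ≤ S.card →
    ∀ H : SimpleGraph (Fin h),
      ∃ (j : Fin h → Fin k) (W : Fin h → Finset (Fin n)),
        StrictMono j ∧ (∀ a, (W a).Nonempty) ∧ (∀ a, ∀ v ∈ W a, part v = j a) ∧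
        (∀ a, j a ∈ S) ∧
        (∀ a b, H.Adj a b ↔ a ≠ b ∧ ∃ u ∈ W a, ∃ v ∈ W b, G.Adj u v) := by
  classical
  intro N
  induction N with
  | zero => intro ω h hω hh hfuel; omega
  | succ N IH =>
    intro ω h hω hh hfuel S hpair hclq hcard H
    have hS2 : 2 ≤ S.card := by have := one_le_phiRM ω h; omega
    obtain ⟨i0, hi0, j0, hj0, hij0⟩ := Finset.one_lt_card.mp (show 1 < S.card by omega)
    obtain ⟨u0, v0, hu0, hv0, huv0⟩ : LinkedP G part i0 j0 := hpair hi0 hj0 hij0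
    match h, hh with
    | 1, _ =>
      refine ⟨fun _ => i0, fun _ => {u0}, ?_, ?_, ?_, ?_, ?_⟩
      · intro a b hab; exact absurd (Subsingleton.elim a b) (by rintro rfl; exact lt_irrefl _ hab)
      · intro a; exact ⟨u0, Finset.mem_singleton_self u0⟩
      · intro a v hv; rw [Finset.mem_singleton.mp hv]; exact hu0
      · intro a; exact hi0
      · intro a b
        rw [Subsingleton.elim a b]
        simp
    | (h'+2), _ =>
      match ω, hω with
      | 1, _ =>
        exfalso
        have h2 : ({u0, v0} : Finset (Fin n)).card ≤ 1 := by
          apply hclq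
          · intro x hx y hy hxy
            simp only [Finset.coe_insert, Set.mem_insert_iff, Finset.coe_singleton,
              Set.mem_singleton_iff] at hx hy
            rcases hx with rfl | rfl <;> rcases hy with rfl | rfl
            · exact absurd rfl hxy
            · exact huv0
            · exact huv0.symm
            · exact absurd rfl hxy
          · intro v hv
            simp only [Finset.mem_insert, Finset.mem_singleton] at hv
            rcases hv with rfl | rfl
            · rw [hu0]; exact hi0
            · rw [hv0]; exact hj0
        have hne : u0 ≠ v0 := G.ne_of_adj huv0
        rw [Finset.card_insert_of_notMem (by simp [hne]), Finset.card_singleton] at h2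
        omega
      | (ω'+2), _ =>
        set p := phiRM (ω'+1) (h'+2) with hp
        set q := phiRM (ω'+2) (h'+1) with hq
        by_cases hbig : ∃ v : Fin n, part v ∈ S ∧
            p + 1 ≤ (S.filter (fun a => a < part v ∧ CompTo G part v a)).card
        · obtain ⟨v, hvS, hvcard⟩ := hbig
          set S₂ := S.filter (fun a => a < part v ∧ CompTo G part v a) with hS₂
          have hsub : S₂ ⊆ S := Finset.filter_subset _ _
          have hclq₂ : ∀ t : Finset (Fin n), ((t : Set (Fin n)).Pairwise G.Adj) →
              (∀ x ∈ t, part x ∈ S₂) → t.card ≤ ω' + 1 := by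
            intro t ht htS
            have hvt : v ∉ t := by
              intro hvmem
              have := (Finset.mem_filter.mp (htS v hvmem)).2.1
              exact lt_irrefl _ this
            have hbig : (insert v t).card ≤ ω' + 2 := by
              apply hclq
              · intro x hx y hy hxy
                simp only [Finset.coe_insert, Set.mem_insert_iff, Finset.mem_coe] at hx hy
                rcases hx with rfl | hx <;> rcases hy with rfl | hy
                · exact absurd rfl hxy
                · exact ((Finset.mem_filter.mp (htS y hy)).2.2 y rfl).symm
                · exact (Finset.mem_filter.mp (htS x hx)).2.2 x rfl
                · exact ht hx hy hxy
              · intro x hx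
                rcases Finset.mem_insert.mp hx with rfl | hx
                · exact hvS
                · exact hsub (htS x hx)
            rw [Finset.card_insert_of_notMem hvt] at hbig
            omega
          obtain ⟨j, W, h1, h2, h3, h4, h5⟩ := IH (ω'+1) (h'+2) (by omega) (by omega)
            (by omega) S₂ (hpair.mono (by exact_mod_cast hsub)) hclq₂ hvcard H
          exact ⟨j, W, h1, h2, h3, fun a => hsub (h4 a), h5⟩
        · push_neg at hbig
          have hSne : S.Nonempty := ⟨i0, hi0⟩
          set smax := S.max' hSne with hsmax
          set M := S.erase smax with hM
          have hsmaxS : smax ∈ S := S.max'_mem hSne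
          have hMcardeq : M.card = S.card - 1 := Finset.card_erase_of_mem hsmaxS
          have hMcard : phiRM (ω'+2) (h'+2) ≤ M.card := by omega
          have hMlt : ∀ a ∈ M, a < smax := by
            intro a ha
            exact Finset.lt_max'_of_mem_erase_max' S hSne (by rw [← hsmax]; exact ha)
          have hMS : M ⊆ S := Finset.erase_subset _ _
          have hcov : ∀ a ∈ M, ∃ v, part v = smax ∧ CompTo G part v a := by
            intro a ha
            obtain ⟨u, v, hu, hv, huv⟩ :=
              hpair (hMS ha) hsmaxS (Finset.ne_of_mem_erase ha)
            exact ⟨v, hv, compTo_of_adj hmod (by rw [hv]; exact hMlt a ha) hu huv⟩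
          have hcovex : ∃ c, ∃ U : Finset (Fin n), U.card = c ∧
              ((∀ v ∈ U, part v = smax) ∧ ∀ a ∈ M, ∃ v ∈ U, CompTo G part v a) := by
            refine ⟨_, M.image (fun a => if ha : a ∈ M then (hcov a ha).choose else u0),
              rfl, ?_, ?_⟩
            · intro v hv
              simp only [Finset.mem_image] at hv
              obtain ⟨a, ha, rfl⟩ := hv
              rw [dif_pos ha]
              exact (hcov a ha).choose_spec.1
            · intro a ha
              refine ⟨_, Finset.mem_image_of_mem _ ha, ?_⟩
              rw [dif_pos ha]
              exact (hcov a ha).choose_spec.2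
          obtain ⟨U, hUcard, hUpart, hUcov⟩ := Nat.find_spec hcovex
          have hpriv : ∀ v ∈ U, ∃ a, a ∈ M ∧ CompTo G part v a ∧
              ∀ v' ∈ U, CompTo G part v' a → v' = v := by
            intro v hv
            by_contra hcon
            push_neg at hcon
            have hcov' : (∀ w ∈ U.erase v, part w = smax) ∧
                ∀ a ∈ M, ∃ w ∈ U.erase v, CompTo G part w a := by
              constructor
              · intro w hw; exact hUpart w (Finset.mem_of_mem_erase hw)
              · intro a ha
                obtain ⟨w, hw, hwa⟩ := hUcov a ha
                by_cases hwv : w = v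
                · subst hwv
                  obtain ⟨v', hv', hv'a, hv'ne⟩ := hcon a ha hwa
                  exact ⟨v', Finset.mem_erase.mpr ⟨hv'ne, hv'⟩, hv'a⟩
                · exact ⟨w, Finset.mem_erase.mpr ⟨hwv, hw⟩, hwa⟩
            have hlt : (U.erase v).card < Nat.find hcovex := by
              rw [Finset.card_erase_of_mem hv, hUcard]
              have : 1 ≤ U.card := Finset.card_pos.mpr ⟨v, hv⟩
              omega
            exact Nat.find_min hcovex hlt ⟨U.erase v, rfl, hcov'⟩
          have _instk : Nonempty (Fin k) := ⟨smax⟩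
          have _instn : Nonempty (Fin n) := ⟨u0⟩
          choose! prv hprvM hprvC hprvU using hpriv
          set S' : Finset (Fin k) := U.image prv with hS'
          have hinj : Set.InjOn prv ↑U := by
            intro v hv v' hv' he
            exact hprvU v' hv' v hv (he ▸ hprvC v hv)
          have hS'card : S'.card = U.card := Finset.card_image_of_injOn hinj
          have hS'M : S' ⊆ M := by
            intro a ha
            obtain ⟨v, hv, rfl⟩ := Finset.mem_image.mp ha
            exact hprvM v hv
          have hS'S : S' ⊆ S := fun a ha => hMS (hS'M ha)
          have htrace : ∀ v ∈ U, (M.filter (fun a => CompTo G part v a)).card ≤ p := by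
            intro v hv
            have h1 : M.filter (fun a => CompTo G part v a) ⊆
                S.filter (fun a => a < part v ∧ CompTo G part v a) := by
              intro a ha
              rw [Finset.mem_filter] at ha ⊢
              exact ⟨hMS ha.1, by rw [hUpart v hv]; exact hMlt a ha.1, ha.2⟩
            have h2 := hbig v (by rw [hUpart v hv]; exact hsmaxS)
            have h3 := Finset.card_le_card h1
            omega
          have hUbig : q + 2 ≤ U.card := by
            by_contra hcon
            push_neg at hcon
            have hMsub : M ⊆ U.biUnion (fun v => M.filter (fun a => CompTo G part v a)) := by
              intro a ha
              obtain ⟨v, hv, hva⟩ := hUcov a ha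
              exact Finset.mem_biUnion.mpr ⟨v, hv, Finset.mem_filter.mpr ⟨ha, hva⟩⟩
            have h1 : M.card ≤ U.card * p :=
              le_trans (Finset.card_le_card hMsub)
                (Finset.card_biUnion_le_card_mul _ _ _ htrace)
            have h2 : phiRM (ω'+2) (h'+2) = p * (q+1) + 1 := by
              rw [phiRM_rec (ω'+2) (h'+2) (by omega) (by omega)]
              simp [hp, hq]
            have h3 : U.card * p ≤ p * (q+1) := by
              rw [mul_comm]
              exact Nat.mul_le_mul_left p (by omega)
            have := le_trans h1 h3
            rw [h2] at hMcard
            omega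
          obtain ⟨j, W, hjmono, hWne, hWpart, hjS', hHadj⟩ :=
            IH (ω'+2) (h'+1) (by omega) (by omega) (by omega) S'
              (hpair.mono (by exact_mod_cast hS'S))
              (fun t ht htS => hclq t ht (fun x hx => hS'S (htS x hx)))
              (by rw [hS'card]; omega) (H.comap Fin.castSucc)
          have hwitex : ∀ a ∈ S', ∃ v, v ∈ U ∧ prv v = a := by
            intro a ha
            obtain ⟨v, hv, rfl⟩ := Finset.mem_image.mp ha
            exact ⟨v, hv, rfl⟩
          choose! wit hwitU hwitprv using hwitex
          have hwitpart : ∀ a ∈ S', part (wit a) = smax := fun a ha => hUpart _ (hwitU a ha)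
          have hwitC : ∀ a ∈ S', CompTo G part (wit a) a := by
            intro a ha
            have := hprvC (wit a) (hwitU a ha)
            rwa [hwitprv a ha] at this
          have hwitKey : ∀ a ∈ S', ∀ b ∈ S', CompTo G part (wit a) b → b = a := by
            intro a ha b hb hc
            have h1 : CompTo G part (wit a) (prv (wit b)) := by rwa [hwitprv b hb]
            have h2 : wit a = wit b := hprvU (wit b) (hwitU b hb) (wit a) (hwitU a ha) h1
            calc b = prv (wit b) := (hwitprv b hb).symm
              _ = prv (wit a) := by rw [h2]
              _ = a := hwitprv a ha
          have hjlt : ∀ a, j a < smax := fun a => hMlt _ (hS'M (hjS' a))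
          set Nfin := Finset.univ.filter
            (fun c : Fin (h'+1) => H.Adj (Fin.castSucc c) (Fin.last (h'+1))) with hNfin
          obtain ⟨Wlast, hP1, hP2, hP3⟩ : ∃ Wl : Finset (Fin n), Wl.Nonempty ∧
              (∀ v ∈ Wl, part v = smax) ∧
              ∀ a : Fin (h'+1),
                (H.Adj (Fin.castSucc a) (Fin.last (h'+1)) ↔ ∃ v ∈ Wl, CompTo G part v (j a)) := by
            rcases Finset.eq_empty_or_nonempty Nfin with hNe | hNne
            · have hqh : h' + 1 ≤ q := le_phiRM (ω'+2) (h'+1) (by omega) (by omega)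
              have him : (Finset.univ.image j).card ≤ h' + 1 :=
                le_trans Finset.card_image_le (by simp)
              have hsp : (S' \ Finset.univ.image j).Nonempty := by
                rw [← Finset.card_pos]
                have := Finset.le_card_sdiff (Finset.univ.image j) S'
                omega
              obtain ⟨asp, hasp⟩ := hsp
              have haspS' : asp ∈ S' := (Finset.mem_sdiff.mp hasp).1
              have haspout : asp ∉ Finset.univ.image j := (Finset.mem_sdiff.mp hasp).2
              refine ⟨{wit asp}, ⟨_, Finset.mem_singleton_self _⟩, ?_, ?_⟩
              · intro v hv
                rw [Finset.mem_singleton.mp hv]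
                exact hwitpart asp haspS'
              · intro a
                constructor
                · intro hadj
                  exfalso
                  have : a ∈ Nfin := by simp [hNfin, hadj]
                  rw [hNe] at this
                  simp at this
                · rintro ⟨v, hv, hvc⟩
                  exfalso
                  rw [Finset.mem_singleton.mp hv] at hvc
                  have : j a = asp := hwitKey asp haspS' (j a) (hjS' a) hvc
                  exact haspout (by rw [← this]; exact Finset.mem_image_of_mem j (Finset.mem_univ a))
            · refine ⟨Nfin.image (fun c => wit (j c)), hNne.image _, ?_, ?_⟩
              · intro v hv
                obtain ⟨c, hc, rfl⟩ := Finset.mem_image.mp hv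
                exact hwitpart _ (hjS' c)
              · intro a
                constructor
                · intro hadj
                  exact ⟨wit (j a), Finset.mem_image_of_mem _ (by simp [hNfin, hadj]),
                    hwitC (j a) (hjS' a)⟩
                · rintro ⟨v, hv, hvc⟩
                  obtain ⟨c, hc, rfl⟩ := Finset.mem_image.mp hv
                  have h1 : j a = j c := hwitKey (j c) (hjS' c) (j a) (hjS' a) hvc
                  have h2 : a = c := hjmono.injective h1
                  subst h2
                  exact (Finset.mem_filter.mp hc).2
          refine ⟨Fin.snoc j smax, Fin.snoc W Wlast, ?_, ?_, ?_, ?_, ?_⟩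
          · intro a b hab
            rcases Fin.eq_castSucc_or_eq_last b with ⟨b', rfl⟩ | rfl
            · rcases Fin.eq_castSucc_or_eq_last a with ⟨a', rfl⟩ | rfl
              · rw [Fin.snoc_castSucc, Fin.snoc_castSucc]
                exact hjmono (Fin.castSucc_lt_castSucc_iff.mp hab)
              · exact absurd hab (Fin.castSucc_lt_last b').asymm
            · rcases Fin.eq_castSucc_or_eq_last a with ⟨a', rfl⟩ | rfl
              · rw [Fin.snoc_castSucc, Fin.snoc_last]
                exact hjlt a'
              · exact absurd hab (lt_irrefl _)
          · intro a
            rcases Fin.eq_castSucc_or_eq_last a with ⟨a', rfl⟩ | rfl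
            · rw [Fin.snoc_castSucc]; exact hWne a'
            · rw [Fin.snoc_last]; exact hP1
          · intro a v hv
            rcases Fin.eq_castSucc_or_eq_last a with ⟨a', rfl⟩ | rfl
            · rw [Fin.snoc_castSucc] at hv ⊢; exact hWpart a' v hv
            · rw [Fin.snoc_last] at hv ⊢; exact hP2 v hv
          · intro a
            rcases Fin.eq_castSucc_or_eq_last a with ⟨a', rfl⟩ | rfl
            · rw [Fin.snoc_castSucc]; exact hS'S (hjS' a')
            · rw [Fin.snoc_last]; exact hsmaxS
          · have hkey : ∀ a' : Fin (h'+1),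
                (H.Adj (Fin.castSucc a') (Fin.last (h'+1)) ↔
                  ∃ u ∈ W a', ∃ v ∈ Wlast, G.Adj u v) := by
              intro a'
              rw [hP3 a']
              constructor
              · rintro ⟨v, hv, hvc⟩
                obtain ⟨u, hu⟩ := hWne a'
                exact ⟨u, hu, v, hv, hvc u (hWpart a' u hu)⟩
              · rintro ⟨u, hu, v, hv, huv⟩
                refine ⟨v, hv, compTo_of_adj hmod ?_ (hWpart a' u hu) huv⟩
                rw [hP2 v hv]
                exact hjlt a'
            intro a b
            rcases Fin.eq_castSucc_or_eq_last a with ⟨a', rfl⟩ | rfl <;>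
              rcases Fin.eq_castSucc_or_eq_last b with ⟨b', rfl⟩ | rfl
            · rw [Fin.snoc_castSucc, Fin.snoc_castSucc]
              have := hHadj a' b'
              simp only [SimpleGraph.comap_adj] at this
              rw [this]
              constructor
              · rintro ⟨hne, rest⟩
                exact ⟨fun he => hne (Fin.castSucc_injective _ he), rest⟩
              · rintro ⟨hne, rest⟩
                exact ⟨fun he => hne (by rw [he]), rest⟩
            · rw [Fin.snoc_castSucc, Fin.snoc_last]
              rw [hkey a']
              constructor
              · intro hx
                exact ⟨(Fin.castSucc_lt_last a').ne, hx⟩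
              · rintro ⟨_, hx⟩
                exact hx
            · rw [Fin.snoc_castSucc, Fin.snoc_last]
              rw [H.adj_comm]
              rw [hkey b']
              constructor
              · rintro ⟨u, hu, v, hv, huv⟩
                exact ⟨(Fin.castSucc_lt_last b').ne', ⟨v, hv, u, hu, huv.symm⟩⟩
              · rintro ⟨_, v, hv, u, hu, huv⟩
                exact ⟨u, hu, v, hv, huv.symm⟩
            · simp





/-- An ordered graph is a graph on `Fin n` with the natural vertex order.
`part : Fin n → Fin k` is a right module partition of `G` if its parts are
consecutive intervals (`part` is monotone and surjective), each part is an
independent set, and for `i < j` the part `V_i` is a module in `G[V_i ∪ V_j]`. -/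
def IsRMP {n k : ℕ} (G : SimpleGraph (Fin n)) (part : Fin n → Fin k) : Prop :=
  Monotone part ∧ Function.Surjective part ∧
  (∀ x y, part x = part y → ¬ G.Adj x y) ∧
  (∀ u u' w, part u = part u' → part u < part w → (G.Adj u w ↔ G.Adj u' w))

/-- `Q` is a transversal minor of `(G, part)`: choose nonempty subsets
`W a ⊆ V_{j a}` for a strictly increasing selection `j` of parts; `Q` records
the existence of edges between the chosen subsets. -/
def IsTransversalMinor {n k ℓ : ℕ} (G : SimpleGraph (Fin n))
    (part : Fin n → Fin k) (Q : SimpleGraph (Fin ℓ)) : Prop :=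
  ∃ (j : Fin ℓ → Fin k) (W : Fin ℓ → Finset (Fin n)),
    StrictMono j ∧ (∀ a, (W a).Nonempty) ∧ (∀ a, ∀ v ∈ W a, part v = j a) ∧
    ∀ a b, Q.Adj a b ↔ a ≠ b ∧ ∃ u ∈ W a, ∃ v ∈ W b, G.Adj u v

/-- `part` is a `C`-right-module-partition of `G` if it is an RMP all of whose
transversal minors belong to `C`. -/
def IsCRMP (C : ∀ m : ℕ, SimpleGraph (Fin m) → Prop) {n k : ℕ}
    (G : SimpleGraph (Fin n)) (part : Fin n → Fin k) : Prop :=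
  IsRMP G part ∧
  ∀ (ℓ : ℕ) (Q : SimpleGraph (Fin ℓ)), IsTransversalMinor G part Q → C ℓ Q

/-- `Q` is the quotient `G/P` : parts are contracted to single vertices, with
an edge `i j` iff some edge of `G` joins `V_i` and `V_j`. -/
def IsQuotient {n k : ℕ} (G : SimpleGraph (Fin n)) (part : Fin n → Fin k)
    (Q : SimpleGraph (Fin k)) : Prop :=
  ∀ i j, Q.Adj i j ↔ i ≠ j ∧ ∃ u v, part u = i ∧ part v = j ∧ G.Adj u v

/-- If the hereditary class `C` of ordered graphs is χ-bounded by `f` and does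
not contain some ordered graph on `h` vertices, then the right extension
`RM(C)` (graphs admitting a `C`-right-module-partition) is χ-bounded: every
such `G` satisfies `χ(G) ≤ f(φ(ω(G), h))`, where `φ` is the function with
`φ(x,1) = φ(1,y) = 1` and `φ(ω,h) = φ(ω−1,h)·(φ(ω,h−1)+1)+1`. -/
theorem rightExtension_chi_bounded :
    ∃ φ : ℕ → ℕ → ℕ,
      (∀ x, 1 ≤ x → φ x 1 = 1) ∧ (∀ y, 1 ≤ y → φ 1 y = 1) ∧
      (∀ w h, 2 ≤ w → 2 ≤ h → φ w h = φ (w - 1) h * (φ w (h - 1) + 1) + 1) ∧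
      ∀ (C : ∀ m : ℕ, SimpleGraph (Fin m) → Prop),
        (∀ (m l : ℕ) (f : Fin l → Fin m), StrictMono f →
          ∀ H : SimpleGraph (Fin m), C m H → C l (H.comap f)) →
        ∀ f : ℕ → ℕ, Monotone f → (∀ (m : ℕ) (H : SimpleGraph (Fin m)), C m H →
          H.Colorable (f H.cliqueNum)) →
        ∀ (h : ℕ), 1 ≤ h → ∀ (H : SimpleGraph (Fin h)), ¬ C h H →
        ∀ (n k : ℕ) (G : SimpleGraph (Fin n)) (part : Fin n → Fin k),
          IsCRMP C G part →
            G.Colorable (f (φ G.cliqueNum h)) := by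
  classical
  refine ⟨phiRM, phiRM_base1, phiRM_base2, phiRM_rec, ?_⟩
  intro C _hHer f hfmono hchi h hh H hH n k G part hCRMP
  obtain ⟨⟨_hmono, hsurj, hind, hmod⟩, hminor⟩ := hCRMP
  set Q : SimpleGraph (Fin k) :=
    { Adj := fun i j => i ≠ j ∧ LinkedP G part i j
      symm := by
        constructor; rintro i j ⟨hne, u, v, hu, hv, huv⟩
        exact ⟨hne.symm, v, u, hv, hu, huv.symm⟩
      loopless := by constructor; rintro i ⟨hne, -⟩; exact hne rfl } with hQ
  have hQadj : ∀ i j, Q.Adj i j ↔ i ≠ j ∧ LinkedP G part i j := fun i j => Iff.rfl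
  have hQtm : IsTransversalMinor G part Q := by
    refine ⟨id, fun i => Finset.univ.filter (fun v => part v = i), strictMono_id, ?_, ?_, ?_⟩
    · intro a
      obtain ⟨v, hv⟩ := hsurj a
      exact ⟨v, by simp [hv]⟩
    · intro a v hv
      simpa using hv
    · intro a b
      rw [hQadj a b]
      constructor
      · rintro ⟨hne, u, v, hu, hv, huv⟩
        exact ⟨hne, u, by simp [hu], v, by simp [hv], huv⟩
      · rintro ⟨hne, u, hu, v, hv, huv⟩
        simp only [Finset.mem_filter, Finset.mem_univ, true_and] at hu hv
        exact ⟨hne, u, v, hu, hv, huv⟩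
  have hQC : C k Q := hminor k Q hQtm
  have hQcol : Q.Colorable (f Q.cliqueNum) := hchi k Q hQC
  have hQclique : Q.cliqueNum ≤ phiRM G.cliqueNum h := by
    by_contra hcon
    push_neg at hcon
    obtain ⟨S, hSclq⟩ := Q.exists_isNClique_cliqueNum
    have hScard : S.card = Q.cliqueNum := hSclq.card_eq
    have hpair : (S : Set (Fin k)).Pairwise (LinkedP G part) := by
      intro i hi j hj hij
      exact (hSclq.isClique hi hj hij).2
    have hclq : ∀ t : Finset (Fin n), ((t : Set (Fin n)).Pairwise G.Adj) →
        (∀ v ∈ t, part v ∈ S) → t.card ≤ G.cliqueNum := by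
      intro t ht _
      exact SimpleGraph.IsClique.card_le_cliqueNum (tc := ht)
    have hGclq1 : 1 ≤ G.cliqueNum := by
      have h2 : 2 ≤ S.card := by
        have := one_le_phiRM G.cliqueNum h
        omega
      obtain ⟨i0, hi0, j0, hj0, hij0⟩ := Finset.one_lt_card.mp (show 1 < S.card by omega)
      obtain ⟨u, v, _, _, _⟩ := hpair hi0 hj0 hij0
      have : ({u} : Finset (Fin n)).card ≤ G.cliqueNum :=
        SimpleGraph.IsClique.card_le_cliqueNum (tc := by
          rw [SimpleGraph.isClique_iff, Finset.coe_singleton]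
          exact Set.pairwise_singleton _ _)
      simpa using this
    obtain ⟨j, W, hx1, hx2, hx3, _, hx5⟩ :=
      realize_all G part hmod (G.cliqueNum + h) G.cliqueNum h hGclq1 hh le_rfl
        S hpair hclq (by omega) H
    exact hH (hminor h H ⟨j, W, hx1, hx2, hx3, hx5⟩)
  have hle : f Q.cliqueNum ≤ f (phiRM G.cliqueNum h) := hfmono hQclique
  obtain ⟨c⟩ := hQcol.mono hle
  refine ⟨SimpleGraph.Coloring.mk (fun v => c (part v)) ?_⟩
  intro u v huv
  have hne : part u ≠ part v := fun he => hind u v he huv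
  have hQuv : Q.Adj (part u) (part v) := ⟨hne, u, v, rfl, rfl, huv⟩
  exact c.valid hQuv
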